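/- Let A be an n × n complex matrix and B an n × n real matrix with nonnegative entries such that ‖A i j‖ ≤ B i j for all i, j. Suppose B is irreducible, meaning that for every pair of indices (i, j) there exists m ∈ ℕ with (B^m) i j > 0, and suppose there is at least one pair (i, j) with ‖A i j‖ < B i j. Then the spectral radius of A is strictly less than the spectral radius of B (viewed as a complex matrix via entrywise coercion). -/

import Mathlib

attribute [local instance] Matrix.linftyOpNormedRing Matrix.linftyOpNormedAlgebra
open Filter Finset

section aux
variable {n : ℕ}

lemma entry_mul_le {X Y X' Y' : Matrix (Fin n) (Fin n) ℝ}
    (hX : ∀ i j, 0 ≤ X i j) (hY : ∀ i j, 0 ≤ Y i j)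
    (hXX : ∀ i j, X i j ≤ X' i j) (hYY : ∀ i j, Y i j ≤ Y' i j) (i j : Fin n) :
    (X * Y) i j ≤ (X' * Y') i j := by
  simp only [Matrix.mul_apply]
  refine Finset.sum_le_sum fun l _ => ?_
  exact mul_le_mul (hXX i l) (hYY l j) (hY l j) ((hX i l).trans (hXX i l))

lemma entry_pow_nonneg {X : Matrix (Fin n) (Fin n) ℝ} (hX : ∀ i j, 0 ≤ X i j) (k : ℕ) :
    ∀ i j, 0 ≤ (X ^ k) i j := by
  induction k with
  | zero => intro i j; simp [Matrix.one_apply]; positivity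
  | succ k ih =>
    intro i j
    rw [pow_succ, Matrix.mul_apply]
    exact Finset.sum_nonneg fun l _ => mul_nonneg (ih i l) (hX l j)

lemma entry_mul_lb {X Y : Matrix (Fin n) (Fin n) ℝ}
    (hX : ∀ i j, 0 ≤ X i j) (hY : ∀ i j, 0 ≤ Y i j) (i k j : Fin n) :
    X i k * Y k j ≤ (X * Y) i j := by
  rw [Matrix.mul_apply]
  exact Finset.single_le_sum (fun l _ => mul_nonneg (hX i l) (hY l j)) (Finset.mem_univ k)

end aux

section aux2
variable {n : ℕ}

lemma entry_pow_le {C B : Matrix (Fin n) (Fin n) ℝ}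
    (hC : ∀ i j, 0 ≤ C i j) (hCB : ∀ i j, C i j ≤ B i j) (k : ℕ) :
    ∀ i j, (C ^ k) i j ≤ (B ^ k) i j := by
  induction k with
  | zero => intro i j; simp
  | succ k ih =>
    intro i j
    rw [pow_succ, pow_succ]
    exact entry_mul_le (entry_pow_nonneg hC k) hC ih hCB i j

lemma entry_mul_nonneg {X Y : Matrix (Fin n) (Fin n) ℝ}
    (hX : ∀ i j, 0 ≤ X i j) (hY : ∀ i j, 0 ≤ Y i j) :
    ∀ i j, 0 ≤ (X * Y) i j := fun i j => by
  rw [Matrix.mul_apply]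
  exact Finset.sum_nonneg fun l _ => mul_nonneg (hX i l) (hY l j)

lemma pos_entry_mul {B : Matrix (Fin n) (Fin n) ℝ} (hB : ∀ i j, 0 ≤ B i j)
    {a b : ℕ} {i k j : Fin n} (h1 : 0 < (B ^ a) i k) (h2 : 0 < (B ^ b) k j) :
    0 < (B ^ (a + b)) i j := by
  rw [pow_add]
  exact lt_of_lt_of_le (mul_pos h1 h2)
    (entry_mul_lb (entry_pow_nonneg hB a) (entry_pow_nonneg hB b) i k j)

lemma strict_entry {C B : Matrix (Fin n) (Fin n) ℝ}
    (hC : ∀ i j, 0 ≤ C i j) (hB : ∀ i j, 0 ≤ B i j) (hCB : ∀ i j, C i j ≤ B i j)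
    {p q : Fin n} (hpq : C p q < B p q) {a b : ℕ} {i j : Fin n}
    (ha : 0 < (B ^ a) i p) (hb : 0 < (B ^ b) q j) :
    (C ^ (a + 1 + b)) i j < (B ^ (a + 1 + b)) i j := by
  have hBC : ∀ i j, 0 ≤ (B - C) i j := fun i j => by
    simp only [Matrix.sub_apply]; linarith [hCB i j]
  have hnm : (C ^ (a + 1 + b)) i j ≤ (B ^ a * C * B ^ b) i j := by
    have h1 : ∀ i j, (C ^ a * C) i j ≤ (B ^ a * C) i j :=
      fun i j => entry_mul_le (entry_pow_nonneg hC a) hC (entry_pow_le hC hCB a)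
        (fun _ _ => le_refl _) i j
    have h2 : ∀ i' j', (C ^ a * C * C ^ b) i' j' ≤ (B ^ a * C * B ^ b) i' j' :=
      fun i' j' => entry_mul_le (entry_mul_nonneg (entry_pow_nonneg hC a) hC)
        (entry_pow_nonneg hC b) h1 (entry_pow_le hC hCB b) i' j'
    calc (C ^ (a + 1 + b)) i j = (C ^ a * C * C ^ b) i j := by
          rw [pow_add, pow_add, pow_one]
      _ ≤ _ := h2 i j
  have hgap : 0 < (B ^ a * (B - C) * B ^ b) i j := by
    have hpos : 0 < (B ^ a) i p * (B - C) p q * (B ^ b) q j := by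
      apply mul_pos (mul_pos ha _) hb
      simp only [Matrix.sub_apply]; linarith
    refine lt_of_lt_of_le hpos ?_
    calc (B ^ a) i p * (B - C) p q * (B ^ b) q j
        ≤ (B ^ a * (B - C)) i q * (B ^ b) q j := by
          apply mul_le_mul_of_nonneg_right
            (entry_mul_lb (entry_pow_nonneg hB a) hBC i p q)
            (le_of_lt hb)
      _ ≤ (B ^ a * (B - C) * B ^ b) i j :=
          entry_mul_lb (entry_mul_nonneg (entry_pow_nonneg hB a) hBC)
            (entry_pow_nonneg hB b) i q j
  have hrw : (B ^ (a + 1 + b)) i j = (B ^ a * C * B ^ b) i j + (B ^ a * (B - C) * B ^ b) i j := by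
    have h : B ^ (a + 1 + b) = B ^ a * C * B ^ b + B ^ a * (B - C) * B ^ b := by
      rw [Matrix.mul_sub, Matrix.sub_mul, pow_add, pow_add, pow_one]
      abel
    rw [h, Matrix.add_apply]
  linarith

end aux2

lemma nat_semigroup_large (S : Set ℕ) (h0 : 0 ∈ S)
    (hadd : ∀ {a b : ℕ}, a ∈ S → b ∈ S → a + b ∈ S)
    {l0 : ℕ} (hl : l0 ∈ S) (hlpos : 0 < l0) :
    ∃ g N : ℕ, 0 < g ∧ (∀ s ∈ S, g ∣ s) ∧ ∀ c : ℕ, g ∣ c → N ≤ c → c ∈ S := by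
  have hsmul : ∀ (k s : ℕ), s ∈ S → k * s ∈ S := by
    intro k
    induction k with
    | zero => intro s _; simpa using h0
    | succ k ih =>
      intro s hs
      have := hadd (ih s hs) hs
      rwa [← Nat.succ_mul] at this
  -- the subgroup of ℤ generated by S is the set of differences
  set D : AddSubgroup ℤ :=
    { carrier := {x : ℤ | ∃ s ∈ S, ∃ t ∈ S, x = (s : ℤ) - t}
      zero_mem' := ⟨0, h0, 0, h0, by simp⟩
      add_mem' := by
        rintro x y ⟨s, hs, t, ht, rfl⟩ ⟨s', hs', t', ht', rfl⟩
        exact ⟨s + s', hadd hs hs', t + t', hadd ht ht', by push_cast; ring⟩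
      neg_mem' := by
        rintro x ⟨s, hs, t, ht, rfl⟩
        exact ⟨t, ht, s, hs, by ring⟩ } with hD
  obtain ⟨a, ha⟩ := Int.subgroup_cyclic (AddSubgroup.closure ((fun s : ℕ => (s : ℤ)) '' S))
  have hdvd : ∀ s ∈ S, a ∣ (s : ℤ) := by
    intro s hs
    have hmem : (s : ℤ) ∈ AddSubgroup.closure ((fun s : ℕ => (s : ℤ)) '' S) :=
      AddSubgroup.subset_closure ⟨s, hs, rfl⟩
    rw [ha, AddSubgroup.mem_closure_singleton] at hmem
    obtain ⟨k, hk⟩ := hmem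
    exact ⟨k, by rw [← hk]; simp [zsmul_eq_mul, mul_comm]⟩
  have haD : a ∈ D := by
    have h1 : a ∈ AddSubgroup.closure ((fun s : ℕ => (s : ℤ)) '' S) := by
      rw [ha]; exact AddSubgroup.subset_closure rfl
    have h2 : AddSubgroup.closure ((fun s : ℕ => (s : ℤ)) '' S) ≤ D := by
      rw [AddSubgroup.closure_le]
      rintro x ⟨s, hs, rfl⟩
      exact ⟨s, hs, 0, h0, by simp⟩
    exact h2 h1
  set g := a.natAbs with hg
  have hgdvd : ∀ s ∈ S, g ∣ s := by
    intro s hs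
    have := hdvd s hs
    rwa [← Int.natAbs_dvd_natAbs, Int.natAbs_natCast] at this
  have hgpos : 0 < g := by
    rcases Nat.eq_zero_or_pos g with h | h
    · exfalso
      have := hgdvd l0 hl
      rw [h] at this
      exact hlpos.ne' (Nat.eq_zero_of_zero_dvd this)
    · exact h
  -- get u v ∈ S with u = v + g
  obtain ⟨s₁, hs₁, t₁, ht₁, hst⟩ := haD
  have key : ∃ u ∈ S, ∃ v ∈ S, u = v + g := by
    rcases le_or_gt 0 a with h | h
    · have : (s₁ : ℤ) = (t₁ : ℤ) + g := by
        rw [hg, Int.natAbs_of_nonneg h]; linarith [hst]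
      exact ⟨s₁, hs₁, t₁, ht₁, by exact_mod_cast this⟩
    · have : (t₁ : ℤ) = (s₁ : ℤ) + g := by
        have : (g : ℤ) = -a := by
          rw [hg, Int.ofNat_natAbs_of_nonpos h.le]
        rw [this]; linarith [hst]
      exact ⟨t₁, ht₁, s₁, hs₁, by exact_mod_cast this⟩
  obtain ⟨u, hu, v, hv, huv⟩ := key
  -- make v positive
  set V := v + l0 with hV
  set U := u + l0 with hU
  have hVS : V ∈ S := hadd hv hl
  have hUS : U ∈ S := hadd hu hl
  have hUV : U = V + g := by omega
  have hVpos : 0 < V := by omega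
  obtain ⟨σ, hσ⟩ := hgdvd V hVS
  have hσpos : 0 < σ := by
    rcases Nat.eq_zero_or_pos σ with h | h
    · rw [h, mul_zero] at hσ; omega
    · exact h
  refine ⟨g, V * V, hgpos, hgdvd, ?_⟩
  intro c hgc hcN
  obtain ⟨k, hk⟩ := hgc
  -- k ≥ σ * σ
  have hkge : σ * σ ≤ k := by
    have h1 : g * (σ * σ * g) ≤ g * k := by
      calc g * (σ * σ * g) = (g * σ) * (g * σ) := by ring
        _ = V * V := by rw [← hσ]
        _ ≤ c := hcN
        _ = g * k := hk
    have h2 : σ * σ * g ≤ k := Nat.le_of_mul_le_mul_left h1 hgpos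
    calc σ * σ = σ * σ * 1 := by ring
      _ ≤ σ * σ * g := Nat.mul_le_mul_left _ hgpos
      _ ≤ k := h2
  set Q := k / σ with hQ
  set r := k % σ with hr
  have hQr : σ * Q + r = k := Nat.div_add_mod k σ
  have hrlt : r < σ := Nat.mod_lt _ hσpos
  have hQge : σ ≤ Q := by
    rw [hQ]
    exact (Nat.le_div_iff_mul_le hσpos).mpr (by nlinarith)
  have hcrep : c = (Q - r) * V + r * U := by
    have h1 : V = g * σ := hσ
    have h2 : c = g * k := hk
    have h3 : U = V + g := hUV
    have h4 : r ≤ Q := le_of_lt (lt_of_lt_of_le hrlt hQge)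
    -- c = g(σQ + r) = QV + rg = (Q-r)V + r(V+g)
    have : c = Q * V + r * g := by
      calc c = g * (σ * Q + r) := by rw [h2, hQr]
        _ = Q * (g * σ) + r * g := by ring
        _ = Q * V + r * g := by rw [← h1]
    rw [this]
    have : Q * V = (Q - r) * V + r * V := by
      rw [← Nat.add_mul]
      congr 1
      omega
    rw [this, h3]
    ring
  rw [hcrep]
  exact hadd (hsmul _ _ hVS) (hsmul _ _ hUS)

lemma exists_good_power {n : ℕ} {B C : Matrix (Fin n) (Fin n) ℝ}
    (hB : ∀ i j, 0 ≤ B i j) (hC : ∀ i j, 0 ≤ C i j) (hCB : ∀ i j, C i j ≤ B i j)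
    (hirr : ∀ i j, ∃ m : ℕ, 0 < (B ^ m) i j)
    {p q : Fin n} (hpq : C p q < B p q) (hBpq : 0 < B p q) :
    ∃ m : ℕ, 1 ≤ m ∧ ∀ i j, 0 < (B ^ m) i j → (C ^ m) i j < (B ^ m) i j := by
  have hB1 : 0 < (B ^ 1) p q := by rwa [pow_one]
  set S : Set ℕ := {ℓ | 0 < (B ^ ℓ) q q} with hS
  have h0 : 0 ∈ S := by simp [hS, Matrix.one_apply_eq]
  have hadd : ∀ {x y : ℕ}, x ∈ S → y ∈ S → x + y ∈ S :=
    fun hx hy => pos_entry_mul hB hx hy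
  obtain ⟨c0, hc0⟩ := hirr q p
  have hl0 : c0 + 1 ∈ S := pos_entry_mul hB hc0 hB1
  obtain ⟨g, N, hgpos, hgdvd, hN⟩ := nat_semigroup_large S h0 hadd hl0 (by omega)
  have cyc : ∀ (i : Fin n) (ℓ : ℕ), 0 < (B ^ ℓ) i i → g ∣ ℓ := by
    intro i ℓ hℓ
    obtain ⟨u, hu⟩ := hirr q i
    obtain ⟨v, hv⟩ := hirr i q
    have h1 : u + v ∈ S := pos_entry_mul hB hu hv
    have h2 : u + ℓ + v ∈ S := pos_entry_mul hB (pos_entry_mul hB hu hℓ) hv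
    have hd := Nat.dvd_sub (hgdvd _ h2) (hgdvd _ h1)
    have he : u + ℓ + v - (u + v) = ℓ := by omega
    rwa [he] at hd
  choose a ha using fun i => hirr i p
  choose b hb using fun j => hirr q j
  set M1 := Finset.univ.sup a with hM1
  set M2 := Finset.univ.sup b with hM2
  refine ⟨M1 + 1 + M2 + N, by omega, ?_⟩
  set m := M1 + 1 + M2 + N with hm
  intro i j him
  have haiM : a i ≤ M1 := Finset.le_sup (Finset.mem_univ i)
  have hbjM : b j ≤ M2 := Finset.le_sup (Finset.mem_univ j)
  set m' := a i + 1 + b j with hm'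
  have hm'le : m' + N ≤ m := by omega
  have hPm' : 0 < (B ^ m') i j :=
    pos_entry_mul hB (pos_entry_mul hB (ha i) hB1) (hb j)
  obtain ⟨w, hw⟩ := hirr j i
  have hcyc1 : g ∣ m + w := cyc i _ (pos_entry_mul hB him hw)
  have hcyc2 : g ∣ m' + w := cyc i _ (pos_entry_mul hB hPm' hw)
  have hdvd' : g ∣ m - m' := by
    have := Nat.dvd_sub hcyc1 hcyc2
    have he : m + w - (m' + w) = m - m' := by omega
    rwa [he] at this
  have hcS : m - m' ∈ S := hN _ hdvd' (by omega)
  have hqj : 0 < (B ^ (m - m' + b j)) q j := pos_entry_mul hB hcS (hb j)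
  have := strict_entry hC hB hCB hpq (ha i) hqj
  have harith : a i + 1 + (m - m' + b j) = m := by omega
  rwa [harith] at this

lemma exists_contraction {n : ℕ} (hn : 0 < n) {B C : Matrix (Fin n) (Fin n) ℝ}
    (hB : ∀ i j, 0 ≤ B i j) (hC : ∀ i j, 0 ≤ C i j) (hCB : ∀ i j, C i j ≤ B i j)
    {m : ℕ} (hm : ∀ i j, 0 < (B ^ m) i j → (C ^ m) i j < (B ^ m) i j) :
    ∃ t : ℝ, 0 ≤ t ∧ t < 1 ∧ ∀ i j, (C ^ m) i j ≤ t * (B ^ m) i j := by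
  haveI : Nonempty (Fin n) := ⟨⟨0, hn⟩⟩
  have hne : (Finset.univ ×ˢ Finset.univ : Finset (Fin n × Fin n)).Nonempty :=
    Finset.univ_nonempty
  set f : Fin n × Fin n → ℝ := fun ij => (C ^ m) ij.1 ij.2 / (B ^ m) ij.1 ij.2 with hf
  set t := (Finset.univ ×ˢ Finset.univ : Finset (Fin n × Fin n)).sup' hne f with ht
  have hmem : ∀ ij : Fin n × Fin n, ij ∈ (Finset.univ ×ˢ Finset.univ : Finset (Fin n × Fin n)) :=
    fun ij => Finset.mem_product.mpr ⟨Finset.mem_univ _, Finset.mem_univ _⟩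
  have hCm0 : ∀ i j, (B ^ m) i j = 0 → (C ^ m) i j = 0 := fun i j h =>
    le_antisymm (h ▸ entry_pow_le hC hCB m i j) (entry_pow_nonneg hC m i j)
  have hle : ∀ i j : Fin n, f (i, j) ≤ t := fun i j => Finset.le_sup' f (hmem (i, j))
  have ht0 : 0 ≤ t := by
    refine le_trans ?_ (hle (Classical.arbitrary _) (Classical.arbitrary _))
    exact div_nonneg (entry_pow_nonneg hC m _ _) (entry_pow_nonneg hB m _ _)
  have ht1 : t < 1 := by
    rw [ht, Finset.sup'_lt_iff]
    rintro ⟨i, j⟩ -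
    rcases eq_or_lt_of_le (entry_pow_nonneg hB m i j) with h | h
    · show f (i, j) < 1
      rw [hf]
      simp only [hCm0 i j h.symm, zero_div]
      exact one_pos
    · show f (i, j) < 1
      rw [hf]
      simp only []
      rw [div_lt_one h]
      exact hm i j h
  refine ⟨t, ht0, ht1, fun i j => ?_⟩
  rcases eq_or_lt_of_le (entry_pow_nonneg hB m i j) with h | h
  · rw [hCm0 i j h.symm, ← h, mul_zero]
  · calc (C ^ m) i j = ((C ^ m) i j / (B ^ m) i j) * (B ^ m) i j := by
          field_simp
      _ ≤ t * (B ^ m) i j := mul_le_mul_of_nonneg_right (hle i j) h.le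

lemma iter_contraction {n : ℕ} {B C : Matrix (Fin n) (Fin n) ℝ}
    (hB : ∀ i j, 0 ≤ B i j) (hC : ∀ i j, 0 ≤ C i j)
    {m : ℕ} {t : ℝ} (ht0 : 0 ≤ t)
    (hcon : ∀ i j, (C ^ m) i j ≤ t * (B ^ m) i j) (k : ℕ) :
    ∀ i j, (C ^ (m * k)) i j ≤ t ^ k * (B ^ (m * k)) i j := by
  induction k with
  | zero => intro i j; simp
  | succ k ih =>
    intro i j
    have hrw : m * (k + 1) = m * k + m := by ring
    rw [hrw]
    calc (C ^ (m * k + m)) i j = ∑ l, (C ^ (m * k)) i l * (C ^ m) l j := by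
          rw [pow_add, Matrix.mul_apply]
      _ ≤ ∑ l, (t ^ k * (B ^ (m * k)) i l) * (t * (B ^ m) l j) := by
          refine Finset.sum_le_sum fun l _ => ?_
          exact mul_le_mul (ih i l) (hcon l j) (entry_pow_nonneg hC m l j)
            (mul_nonneg (pow_nonneg ht0 k) (entry_pow_nonneg hB (m * k) i l))
      _ = t ^ (k + 1) * (B ^ (m * k + m)) i j := by
          rw [pow_add B, Matrix.mul_apply, Finset.mul_sum]
          refine Finset.sum_congr rfl fun l _ => ?_
          ring

section analysis
variable {n : ℕ}

lemma norm_pow_entry_le {A : Matrix (Fin n) (Fin n) ℂ} {C : Matrix (Fin n) (Fin n) ℝ}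
    (hAC : ∀ i j, ‖A i j‖ ≤ C i j) (k : ℕ) :
    ∀ i j, ‖(A ^ k) i j‖ ≤ (C ^ k) i j := by
  have hC : ∀ i j, 0 ≤ C i j := fun i j => le_trans (norm_nonneg _) (hAC i j)
  induction k with
  | zero =>
    intro i j
    by_cases h : i = j <;> simp [Matrix.one_apply, h]
  | succ k ih =>
    intro i j
    rw [pow_succ, pow_succ, Matrix.mul_apply, Matrix.mul_apply]
    calc ‖∑ l, (A ^ k) i l * A l j‖ ≤ ∑ l, ‖(A ^ k) i l * A l j‖ := norm_sum_le _ _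
      _ ≤ ∑ l, (C ^ k) i l * C l j := by
          refine Finset.sum_le_sum fun l _ => ?_
          rw [norm_mul]
          exact mul_le_mul (ih i l) (hAC l j) (norm_nonneg _) (entry_pow_nonneg hC k i l)

lemma map_pow_complex (B : Matrix (Fin n) (Fin n) ℝ) (k : ℕ) :
    (B.map (fun x : ℝ => (x : ℂ))) ^ k = (B ^ k).map (fun x : ℝ => (x : ℂ)) := by
  have h : ∀ M : Matrix (Fin n) (Fin n) ℝ,
      M.map (fun x : ℝ => (x : ℂ)) = Complex.ofRealHom.mapMatrix M := fun M => rfl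
  rw [h, h, ← map_pow]

lemma nnnorm_le_scaled [Nonempty (Fin n)] {A : Matrix (Fin n) (Fin n) ℂ}
    {B : Matrix (Fin n) (Fin n) ℝ} {s : ℝ} (hs : 0 ≤ s) (hB : ∀ i j, 0 ≤ B i j)
    (h : ∀ i j, ‖A i j‖ ≤ s * B i j) :
    ‖A‖₊ ≤ s.toNNReal * ‖B.map (fun x : ℝ => (x : ℂ))‖₊ := by
  rw [Matrix.linfty_opNNNorm_def, Matrix.linfty_opNNNorm_def]
  refine Finset.sup_le fun i _ => ?_
  have hrow : ∑ j, ‖A i j‖₊ ≤ s.toNNReal * ∑ j, ‖((B i j : ℝ) : ℂ)‖₊ := by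
    rw [Finset.mul_sum]
    refine Finset.sum_le_sum fun j _ => ?_
    rw [← NNReal.coe_le_coe]
    push_cast [Real.coe_toNNReal s hs]
    rw [Complex.norm_real, Real.norm_of_nonneg (hB i j)]
    exact h i j
  refine hrow.trans (mul_le_mul_right ?_ _)
  exact Finset.le_sup (f := fun i => ∑ j, ‖(B.map (fun x : ℝ => (x : ℂ))) i j‖₊)
    (Finset.mem_univ i)

lemma entry_le_nnnorm {B : Matrix (Fin n) (Fin n) ℝ} (hB : ∀ i j, 0 ≤ B i j) (q : Fin n) :
    (B q q).toNNReal ≤ ‖B.map (fun x : ℝ => (x : ℂ))‖₊ := by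
  rw [Matrix.linfty_opNNNorm_def]
  refine le_trans ?_ (Finset.le_sup (Finset.mem_univ q))
  refine le_trans ?_ (Finset.single_le_sum (f := fun j => ‖(B.map (fun x : ℝ => (x : ℂ))) q j‖₊)
    (fun j _ => zero_le) (Finset.mem_univ q))
  rw [← NNReal.coe_le_coe]
  simp only [Matrix.map_apply, Real.coe_toNNReal _ (hB q q), coe_nnnorm, Complex.norm_real]
  exact le_abs_self _

end analysis

lemma diag_pow_ge {n : ℕ} {B : Matrix (Fin n) (Fin n) ℝ} (hB : ∀ i j, 0 ≤ B i j)
    {l : ℕ} (q : Fin n) (k : ℕ) :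
    ((B ^ l) q q) ^ k ≤ (B ^ (l * k)) q q := by
  induction k with
  | zero => simp [Matrix.one_apply_eq]
  | succ k ih =>
    have hrw : l * (k + 1) = l * k + l := by ring
    rw [hrw]
    calc ((B ^ l) q q) ^ (k + 1) = ((B ^ l) q q) ^ k * (B ^ l) q q := pow_succ _ _
      _ ≤ (B ^ (l * k)) q q * (B ^ l) q q :=
          mul_le_mul_of_nonneg_right ih (entry_pow_nonneg hB l q q)
      _ ≤ (B ^ (l * k) * B ^ l) q q :=
          entry_mul_lb (entry_pow_nonneg hB (l * k)) (entry_pow_nonneg hB l) q q q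
      _ = (B ^ (l * k + l)) q q := by rw [pow_add]

theorem stmt11 (n : ℕ) (hn : 0 < n)
    (A : Matrix (Fin n) (Fin n) ℂ) (B : Matrix (Fin n) (Fin n) ℝ)
    (hB : ∀ i j, 0 ≤ B i j) (hAB : ∀ i j, ‖A i j‖ ≤ B i j)
    (hirr : ∀ i j, ∃ m : ℕ, 0 < (B ^ m) i j)
    (hlt : ∃ i j, ‖A i j‖ < B i j) :
    spectralRadius ℂ A < spectralRadius ℂ (B.map (fun x : ℝ => (x : ℂ))) := by
  haveI : Nonempty (Fin n) := ⟨⟨0, hn⟩⟩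
  set Bc := B.map (fun x : ℝ => (x : ℂ)) with hBc
  set C : Matrix (Fin n) (Fin n) ℝ := Matrix.of (fun i j => ‖A i j‖) with hCdef
  have hC : ∀ i j, 0 ≤ C i j := fun i j => by
    simp only [hCdef, Matrix.of_apply]; exact norm_nonneg _
  have hCB : ∀ i j, C i j ≤ B i j := fun i j => by
    simp only [hCdef, Matrix.of_apply]; exact hAB i j
  obtain ⟨p, q, hpq⟩ := hlt
  have hpq' : C p q < B p q := by
    simp only [hCdef, Matrix.of_apply]; exact hpq
  have hBpq : 0 < B p q := lt_of_le_of_lt (norm_nonneg _) hpq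
  -- spectral radius of B is positive
  have hρBpos : 0 < spectralRadius ℂ Bc := by
    obtain ⟨c0, hc0⟩ := hirr q p
    set l := c0 + 1 with hl
    have hβ : 0 < (B ^ l) q q :=
      pos_entry_mul hB hc0 (by rwa [pow_one])
    set β := (B ^ l) q q with hβdef
    have hsub : Tendsto (fun k : ℕ => (l * k : ℕ)) atTop atTop :=
      tendsto_atTop_mono (fun k => Nat.le_mul_of_pos_left k (by omega)) tendsto_id
    have hGB : Tendsto (fun k : ℕ => (‖Bc ^ (l * k)‖₊ : ENNReal) ^ (1 / (l * k : ℕ) : ℝ))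
        atTop (nhds (spectralRadius ℂ Bc)) :=
      (spectrum.pow_nnnorm_pow_one_div_tendsto_nhds_spectralRadius Bc).comp hsub
    have hlb : ∀ᶠ k : ℕ in atTop, ((β.toNNReal : ENNReal) ^ (1 / (l : ℝ)))
        ≤ (‖Bc ^ (l * k)‖₊ : ENNReal) ^ (1 / (l * k : ℕ) : ℝ) := by
      filter_upwards [eventually_ge_atTop 1] with k hk
      have h1 : (β ^ k).toNNReal ≤ ‖Bc ^ (l * k)‖₊ := by
        rw [hBc, map_pow_complex]
        refine le_trans ?_ (entry_le_nnnorm (entry_pow_nonneg hB (l * k)) q)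
        exact Real.toNNReal_mono (diag_pow_ge hB q k)
      have h2 : ((β.toNNReal : ENNReal) ^ (k : ℕ)) ≤ (‖Bc ^ (l * k)‖₊ : ENNReal) := by
        rw [← ENNReal.coe_pow, ENNReal.coe_le_coe, ← Real.toNNReal_pow hβ.le]
        exact h1
      calc (β.toNNReal : ENNReal) ^ (1 / (l : ℝ))
          = ((β.toNNReal : ENNReal) ^ (k : ℕ)) ^ (1 / (l * k : ℕ) : ℝ) := by
            rw [← ENNReal.rpow_natCast, ← ENNReal.rpow_mul]
            congr 1
            have hk0 : (k : ℝ) ≠ 0 := Nat.cast_ne_zero.mpr (by omega)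
            have hl0 : (l : ℝ) ≠ 0 := Nat.cast_ne_zero.mpr (by omega)
            push_cast
            field_simp
        _ ≤ (‖Bc ^ (l * k)‖₊ : ENNReal) ^ (1 / (l * k : ℕ) : ℝ) := by
            apply ENNReal.rpow_le_rpow h2
            positivity
    have hge : ((β.toNNReal : ENNReal) ^ (1 / (l : ℝ))) ≤ spectralRadius ℂ Bc :=
      ge_of_tendsto hGB hlb
    refine lt_of_lt_of_le ?_ hge
    apply ENNReal.rpow_pos
    · exact_mod_cast Real.toNNReal_pos.mpr hβ
    · exact ENNReal.coe_ne_top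
  have hρBtop : spectralRadius ℂ Bc ≠ ⊤ :=
    ((spectrum.spectralRadius_le_nnnorm (𝕜 := ℂ) (a := Bc)).trans_lt ENNReal.coe_lt_top).ne
  -- contraction
  obtain ⟨m, hm1, hmprop⟩ := exists_good_power hB hC hCB hirr hpq' hBpq
  obtain ⟨t, ht0, ht1, hcon⟩ := exists_contraction hn hB hC hCB hmprop
  set τ : ENNReal := (t.toNNReal : ENNReal) ^ (1 / (m : ℝ)) with hτ
  have hτ1 : τ < 1 := by
    apply ENNReal.rpow_lt_one
    · exact_mod_cast Real.toNNReal_lt_one.mpr ht1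
    · positivity
  have hτtop : τ ≠ ⊤ :=
    ENNReal.rpow_ne_top_of_nonneg (by positivity) ENNReal.coe_ne_top
  have hsub : Tendsto (fun k : ℕ => (m * k : ℕ)) atTop atTop :=
    tendsto_atTop_mono (fun k => Nat.le_mul_of_pos_left k (by omega)) tendsto_id
  have hGA : Tendsto (fun k : ℕ => (‖A ^ (m * k)‖₊ : ENNReal) ^ (1 / (m * k : ℕ) : ℝ))
      atTop (nhds (spectralRadius ℂ A)) :=
    (spectrum.pow_nnnorm_pow_one_div_tendsto_nhds_spectralRadius A).comp hsub
  have hGB : Tendsto (fun k : ℕ => τ * (‖Bc ^ (m * k)‖₊ : ENNReal) ^ (1 / (m * k : ℕ) : ℝ))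
      atTop (nhds (τ * spectralRadius ℂ Bc)) :=
    ENNReal.Tendsto.const_mul
      ((spectrum.pow_nnnorm_pow_one_div_tendsto_nhds_spectralRadius Bc).comp hsub)
      (Or.inr hτtop)
  have hev : ∀ᶠ k : ℕ in atTop,
      (‖A ^ (m * k)‖₊ : ENNReal) ^ (1 / (m * k : ℕ) : ℝ)
        ≤ τ * (‖Bc ^ (m * k)‖₊ : ENNReal) ^ (1 / (m * k : ℕ) : ℝ) := by
    filter_upwards [eventually_ge_atTop 1] with k hk
    have hAC : ∀ i j, ‖A i j‖ ≤ C i j := fun i j => le_of_eq (by simp [hCdef])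
    have hAk : ∀ i j, ‖(A ^ (m * k)) i j‖ ≤ t ^ k * (B ^ (m * k)) i j := fun i j =>
      (norm_pow_entry_le hAC (m * k) i j).trans (iter_contraction hB hC ht0 hcon k i j)
    have h1 : ‖A ^ (m * k)‖₊ ≤ (t ^ k).toNNReal * ‖(B ^ (m * k)).map (fun x : ℝ => (x : ℂ))‖₊ :=
      nnnorm_le_scaled (pow_nonneg ht0 k) (entry_pow_nonneg hB (m * k)) hAk
    have h1' : (‖A ^ (m * k)‖₊ : ENNReal)
        ≤ ((t.toNNReal : ENNReal) ^ (k : ℕ)) * (‖Bc ^ (m * k)‖₊ : ENNReal) := by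
      rw [hBc, map_pow_complex, ← ENNReal.coe_pow, ← ENNReal.coe_mul, ENNReal.coe_le_coe,
        ← Real.toNNReal_pow ht0]
      exact h1
    have hmk0 : (0 : ℝ) ≤ 1 / (m * k : ℕ) := by positivity
    calc (‖A ^ (m * k)‖₊ : ENNReal) ^ (1 / (m * k : ℕ) : ℝ)
        ≤ (((t.toNNReal : ENNReal) ^ (k : ℕ)) * (‖Bc ^ (m * k)‖₊ : ENNReal))
            ^ (1 / (m * k : ℕ) : ℝ) := ENNReal.rpow_le_rpow h1' hmk0
      _ = (((t.toNNReal : ENNReal) ^ (k : ℕ)) ^ (1 / (m * k : ℕ) : ℝ))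
            * (‖Bc ^ (m * k)‖₊ : ENNReal) ^ (1 / (m * k : ℕ) : ℝ) :=
          ENNReal.mul_rpow_of_nonneg _ _ hmk0
      _ = τ * (‖Bc ^ (m * k)‖₊ : ENNReal) ^ (1 / (m * k : ℕ) : ℝ) := by
          congr 1
          rw [hτ, ← ENNReal.rpow_natCast, ← ENNReal.rpow_mul]
          congr 1
          have hk0 : (k : ℝ) ≠ 0 := Nat.cast_ne_zero.mpr (by omega)
          have hm0 : (m : ℝ) ≠ 0 := Nat.cast_ne_zero.mpr (by omega)
          push_cast
          field_simp
  have hfinal : spectralRadius ℂ A ≤ τ * spectralRadius ℂ Bc :=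
    le_of_tendsto_of_tendsto hGA hGB hev
  refine lt_of_le_of_lt hfinal ?_
  calc τ * spectralRadius ℂ Bc < 1 * spectralRadius ℂ Bc := by
        rw [mul_comm τ, mul_comm 1]
        exact ENNReal.mul_lt_mul_right hρBpos.ne' hρBtop hτ1
    _ = spectralRadius ℂ Bc := one_mul _
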